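/- arXiv:2210.11192 — 4 statements merged into one kernel-verified Lean document; each statement's English description precedes it below -/
import Mathlib

section
/- For any map A' → A of presheaves Δ_inert^op → Set, the induced map of simplicial sets j_!(A') → j_!(A) is CULF, i.e., for every active map g : [k'] → [k] in Δ the naturality square comparing j_!(A')_k → j_!(A')_{k'} and j_!(A)_k → j_!(A)_{k'} is a pullback of sets. -/
/-! Preliminaries: the active-inert factorization system on the simplex
category, the inert subcategory `Δ_inert`, the one-object category `Bℕ`,
twisted arrow categories, and the explicit free decomposition space formula,
following Hackney–Kock, "Free decomposition spaces". -/

open CategoryTheory SimplexCategory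

namespace FreeDecompPaper

/-- A map in the simplex category is *active* if it preserves endpoints:
`f 0 = 0` and `f (last) = last`. -/
def IsActive {x y : SimplexCategory} (f : x ⟶ y) : Prop :=
  f.toOrderHom 0 = 0 ∧ f.toOrderHom (Fin.last x.len) = Fin.last y.len

/-- A map in the simplex category is *inert* (distance-preserving) if
`f (i+1) = f i + 1` for all `i`. -/
def IsInert {x y : SimplexCategory} (f : x ⟶ y) : Prop :=
  ∀ i : Fin x.len, (f.toOrderHom i.succ : ℕ) = (f.toOrderHom i.castSucc : ℕ) + 1

lemma isInert_id (x : SimplexCategory) : IsInert (𝟙 x) := by intro i; simp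

lemma isInert_from_zero {n : ℕ} (f : mk 0 ⟶ mk n) : IsInert f := fun i => i.elim0

lemma isInert_comp {x y z : SimplexCategory} {f : x ⟶ y} {g : y ⟶ z}
    (hf : IsInert f) (hg : IsInert g) : IsInert (f ≫ g) := by
  intro i
  have key : ∀ a b : Fin (y.len + 1), (b : ℕ) = (a : ℕ) + 1 →
      (g.toOrderHom b : ℕ) = (g.toOrderHom a : ℕ) + 1 := by
    intro a b hab
    have ha : (a : ℕ) < y.len := by have := b.isLt; omega
    have e1 : (⟨(a : ℕ), ha⟩ : Fin y.len).castSucc = a := by ext; simp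
    have e2 : (⟨(a : ℕ), ha⟩ : Fin y.len).succ = b := by ext; simp; omega
    have := hg ⟨(a : ℕ), ha⟩
    rw [e1, e2] at this
    exact this
  simpa using key _ _ (hf i)

lemma isActive_id (x : SimplexCategory) : IsActive (𝟙 x) := by
  constructor <;> simp

lemma isActive_comp {x y z : SimplexCategory} {f : x ⟶ y} {g : y ⟶ z}
    (hf : IsActive f) (hg : IsActive g) : IsActive (f ≫ g) := by
  constructor
  · show g.toOrderHom (f.toOrderHom 0) = 0
    rw [hf.1, hg.1]
  · show g.toOrderHom (f.toOrderHom (Fin.last x.len)) = Fin.last z.len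
    rw [hf.2, hg.2]

/-- The inert map `ρᵢ : [1] → [k]` with image `{i, i+1}` (0-indexed vertices;
in the 1-indexed labelling of the paper its image is `{i-1, i}`). -/
def rho (k : ℕ) (i : Fin k) : mk 1 ⟶ mk k :=
  mkHom ⟨fun j => ⟨(i : ℕ) + (j : ℕ), by have := i.isLt; have := j.isLt; omega⟩,
    fun a b h => by
      simp only [Fin.mk_le_mk]
      have : (a : ℕ) ≤ (b : ℕ) := h
      omega⟩

/-- The vertex map `[0] → [k]` picking out the vertex `j`. -/
def vtx (k : ℕ) (j : Fin (k + 1)) : mk 0 ⟶ mk k :=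
  mkHom ⟨fun _ => j, fun _ _ _ => le_refl _⟩

/-- The unique active map `[1] → [k]`. -/
def mu (k : ℕ) : mk 1 ⟶ mk k :=
  mkHom ⟨fun j => ⟨(j : ℕ) * k, by
      have hj : (j : ℕ) ≤ 1 := by have := j.isLt; omega
      have : (j : ℕ) * k ≤ 1 * k := Nat.mul_le_mul_right k hj
      omega⟩,
    fun a b h => by
      simp only [Fin.mk_le_mk]
      exact Nat.mul_le_mul_right k h⟩

lemma isActive_mu (k : ℕ) : IsActive (mu k) := by
  constructor
  · ext
    show ((0 : Fin 2) : ℕ) * k = ((0 : Fin (k+1)) : ℕ)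
    simp
  · ext
    show ((Fin.last 1 : Fin 2) : ℕ) * k = ((Fin.last k : Fin (k+1)) : ℕ)
    simp [Fin.last]

/-- Iterated bottom coface `(d⊥)^a : [m] → [m+a]`, where `d⊥ = δ 0 : i ↦ i+1`. -/
def dBotPow (m : ℕ) : (a : ℕ) → (mk m ⟶ mk (m + a))
  | 0 => 𝟙 _
  | a + 1 => dBotPow m a ≫ δ (0 : Fin (m + a + 2))

/-- Iterated top coface `(d⊤)^b : [m] → [m+b]`, where `d⊤ = δ (last) : i ↦ i`. -/
def dTopPow (m : ℕ) : (b : ℕ) → (mk m ⟶ mk (m + b))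
  | 0 => 𝟙 _
  | b + 1 => dTopPow m b ≫ δ (Fin.last (m + b + 1))

lemma isInert_dBot (m : ℕ) : IsInert (δ (0 : Fin (m + 2)) : mk m ⟶ mk (m + 1)) := by
  intro i
  show ((0 : Fin (m+2)).succAbove i.succ : ℕ) = ((0 : Fin (m+2)).succAbove i.castSucc : ℕ) + 1
  rw [Fin.succAbove_of_le_castSucc _ _ (by simp [Fin.le_def]),
    Fin.succAbove_of_le_castSucc _ _ (by simp [Fin.le_def])]
  simp

lemma isInert_dTop (m : ℕ) : IsInert (δ (Fin.last (m + 1)) : mk m ⟶ mk (m + 1)) := by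
  intro i
  show ((Fin.last (m+1)).succAbove i.succ : ℕ) = ((Fin.last (m+1)).succAbove i.castSucc : ℕ) + 1
  have hi : (i : ℕ) < m := by have := i.isLt; simpa [SimplexCategory.len_mk] using this
  rw [Fin.succAbove_of_castSucc_lt _ _ (by
      simp only [Fin.lt_def, Fin.coe_castSucc, Fin.val_succ, Fin.val_last]; omega),
    Fin.succAbove_of_castSucc_lt _ _ (by
      simp only [Fin.lt_def, Fin.coe_castSucc, Fin.val_last]; omega)]
  simp

lemma isInert_dBotPow (m a : ℕ) : IsInert (dBotPow m a) := by
  induction a with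
  | zero => exact isInert_id _
  | succ a ih => exact isInert_comp ih (isInert_dBot _)

lemma isInert_dTopPow (m b : ℕ) : IsInert (dTopPow m b) := by
  induction b with
  | zero => exact isInert_id _
  | succ b ih => exact isInert_comp ih (isInert_dTop _)

/-- The subcategory `Δ_inert` of the simplex category: objects are natural
numbers `n` (standing for the ordinal `[n]`), and morphisms `m ⟶ n` are the
inert maps `[m] → [n]`. -/
structure InertCat where
  n : ℕ

instance : Category InertCat where
  Hom x y := {f : mk x.n ⟶ mk y.n // IsInert f}
  id x := ⟨𝟙 _, isInert_id _⟩
  comp f g := ⟨f.1 ≫ g.1, isInert_comp f.2 g.2⟩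
  id_comp f := by apply Subtype.ext; simp
  comp_id f := by apply Subtype.ext; simp
  assoc f g h := by apply Subtype.ext; simp

/-- The inclusion `j : Δ_inert → Δ`. -/
def jF : InertCat ⥤ SimplexCategory where
  obj x := mk x.n
  map f := f.1
  map_id _ := rfl
  map_comp _ _ := rfl

/-- The top vertex `[0] → [m]` as a morphism of `Δ_inert`. -/
def topV (m : ℕ) : (⟨0⟩ : InertCat) ⟶ ⟨m⟩ :=
  ⟨vtx m (Fin.last m), isInert_from_zero _⟩

/-- The bottom vertex `[0] → [m]` as a morphism of `Δ_inert`. -/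
def botV (m : ℕ) : (⟨0⟩ : InertCat) ⟶ ⟨m⟩ :=
  ⟨vtx m 0, isInert_from_zero _⟩

/-- The outer coface `d⊥ : [0] → [1]` (omitting `0`) as a morphism of `Δ_inert`. -/
def dBotI : (⟨0⟩ : InertCat) ⟶ ⟨1⟩ := ⟨δ (0 : Fin 2), isInert_from_zero _⟩

/-- The outer coface `d⊤ : [0] → [1]` (omitting the top) as a morphism of `Δ_inert`. -/
def dTopI : (⟨0⟩ : InertCat) ⟶ ⟨1⟩ := ⟨δ (1 : Fin 2), isInert_from_zero _⟩

/-- The category with objects `ℕ` and morphisms `m ⟶ n` the pairs `(a,b)`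
with `a + m + b = n`, composed by componentwise addition. -/
structure NPairCat where
  n : ℕ

instance : Category NPairCat where
  Hom x y := {p : ℕ × ℕ // p.1 + x.n + p.2 = y.n}
  id x := ⟨(0, 0), by omega⟩
  comp f g := ⟨(f.1.1 + g.1.1, f.1.2 + g.1.2), by have h1 := f.2; have h2 := g.2; omega⟩
  id_comp f := by apply Subtype.ext; obtain ⟨⟨a, b⟩, h⟩ := f; simp
  comp_id f := by apply Subtype.ext; obtain ⟨⟨a, b⟩, h⟩ := f; simp
  assoc f g h := by apply Subtype.ext; simp; omega

/-- The one-object category `Bℕ` with endomorphism monoid `(ℕ,+)`. -/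
abbrev BN := SingleObj (Multiplicative ℕ)

/-- The twisted arrow category of a category `C`: objects are arrows of `C`,
and a morphism from `f'` to `f` is a pair `(a, b)` with `f = a ≫ f' ≫ b`,
i.e. `f = b ∘ f' ∘ a`. -/
def Tw (C : Type u) [Category.{v} C] := Σ (x : C) (y : C), x ⟶ y

instance (C : Type u) [Category.{v} C] : Category (Tw C) where
  Hom f g := {p : (g.1 ⟶ f.1) × (f.2.1 ⟶ g.2.1) // g.2.2 = p.1 ≫ f.2.2 ≫ p.2}
  id f := ⟨(𝟙 _, 𝟙 _), by simp⟩
  comp u v := ⟨(v.1.1 ≫ u.1.1, u.1.2 ≫ v.1.2), by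
    have hu := u.2
    have hv := v.2
    simp only []
    simp only [hv, hu, Category.assoc]⟩
  id_comp u := by apply Subtype.ext; simp
  comp_id u := by apply Subtype.ext; simp
  assoc u v w := by apply Subtype.ext; simp

/-- Extract the pair of natural numbers underlying a morphism in `Tw Bℕ`. -/
def twBNPair {f g : Tw BN} (u : f ⟶ g) : ℕ × ℕ :=
  (Multiplicative.toAdd (show Multiplicative ℕ from u.1.1),
   Multiplicative.toAdd (show Multiplicative ℕ from u.1.2))

/-- Extract the natural number underlying an object of `Tw Bℕ`. -/
def twBNObj (f : Tw BN) : ℕ :=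
  Multiplicative.toAdd (show Multiplicative ℕ from f.2.2)

/-- The type of `k`-simplices of the free simplicial set on `A : Δ_inert^op → Set`:
the explicit formula `X_k = ∑_{α : [k] ↠ [n] active} A_n`. -/
def FD (A : InertCat ᵒᵖ ⥤ Type) (k : ℕ) : Type :=
  Σ n : ℕ, {α : mk k ⟶ mk n // IsActive α} × A.obj (Opposite.op ⟨n⟩)

/-- The action of an active map `g : [k'] → [k]` on the free simplicial set,
given by precomposition on the indexing active maps and the identity on summands. -/
def FDmap (A : InertCat ᵒᵖ ⥤ Type) {k' k : ℕ} (g : mk k' ⟶ mk k) (hg : IsActive g) :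
    FD A k → FD A k' :=
  fun x => ⟨x.1, ⟨g ≫ x.2.1.1, isActive_comp hg x.2.1.2⟩, x.2.2⟩

/-- The map of free simplicial sets induced by a natural transformation. -/
def FDmapNat {A' A : InertCat ᵒᵖ ⥤ Type} (η : A' ⟶ A) (k : ℕ) : FD A' k → FD A k :=
  fun x => ⟨x.1, x.2.1, η.app _ x.2.2⟩

/-- The tuple of successive differences of a map `α : [k] → [n]`. -/
def diff {k n : ℕ} (α : mk k ⟶ mk n) : Fin k → ℕ :=
  fun i => (α.toOrderHom i.succ : ℕ) - (α.toOrderHom i.castSucc : ℕ)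

/-- The set `Act(k)` of active maps out of `[k]` (with arbitrary codomain). -/
def ActFrom (k : ℕ) : Type :=
  Σ n : ℕ, {α : mk k ⟶ mk n // IsActive α}

/-- The difference map `Act(k) → ℕ^k`. -/
def diffMap (k : ℕ) : ActFrom k → (Fin k → ℕ) := fun x => diff x.2.1

/-- The action of `φ : [k'] → [k]` on the `k`-simplices `ℕ^k` of the nerve of
`Bℕ`: the `i`-th entry of the result is the sum of the entries from `φ(i-1)`
to `φ(i) - 1`. -/
def nerveBNAct {k' k : ℕ} (φ : mk k' ⟶ mk k) (x : Fin k → ℕ) : Fin k' → ℕ :=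
  fun i => ∑ j ∈ Finset.Ico ((φ.toOrderHom i.castSucc : ℕ)) ((φ.toOrderHom i.succ : ℕ)),
    (fun t => if h : t < k then x ⟨t, h⟩ else 0) j

/-- The inert map `γᵢ : [nᵢ] → [n]`, `j ↦ α(i) + j` (where `nᵢ = α(i+1) - α(i)`),
appearing in the active-inert factorization of `α ∘ ρᵢ`. -/
def segIncl {k n : ℕ} (α : mk k ⟶ mk n) (i : Fin k) : mk (diff α i) ⟶ mk n :=
  mkHom ⟨fun j => ⟨(α.toOrderHom i.castSucc : ℕ) + (j : ℕ), by
      have hj : (j : ℕ) ≤ diff α i := by have := j.isLt; simp [len_mk] at this; omega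
      have hle : (α.toOrderHom i.castSucc : ℕ) ≤ (α.toOrderHom i.succ : ℕ) :=
        α.toOrderHom.monotone (Fin.castSucc_le_succ i)
      have := (α.toOrderHom i.succ).isLt
      simp only [diff] at hj
      simp [len_mk] at *
      omega⟩,
    fun a b h => by
      simp only [Fin.mk_le_mk]
      have : (a : ℕ) ≤ (b : ℕ) := h
      omega⟩

lemma isInert_segIncl {k n : ℕ} (α : mk k ⟶ mk n) (i : Fin k) :
    IsInert (segIncl α i) := by
  intro t
  show ((α.toOrderHom i.castSucc : ℕ) + (t.succ : ℕ)) =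
    ((α.toOrderHom i.castSucc : ℕ) + (t.castSucc : ℕ)) + 1
  simp
  omega

/-- `γᵢ` as a morphism of `Δ_inert`. -/
def segInclI {k n : ℕ} (α : mk k ⟶ mk n) (i : Fin k) : (⟨diff α i⟩ : InertCat) ⟶ ⟨n⟩ :=
  ⟨segIncl α i, isInert_segIncl α i⟩

/-- The Segal map of the free simplicial set `X = j_!(A)`: it sends the
`α`-summand `A_n` of `X_k` to the tuple of its restrictions along the `γᵢ`. -/
def fdSegalMap (A : InertCat ᵒᵖ ⥤ Type) (k : ℕ) : FD A k → (Fin k → FD A 1) :=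
  fun x i => ⟨diff x.2.1.1 i, ⟨mu (diff x.2.1.1 i), isActive_mu _⟩,
    A.map (segInclI x.2.1.1 i).op x.2.2⟩

/-- Matching (fiber product over `X_0`) condition for a tuple in `(X_1)^k`:
consecutive components agree in `A_0` under top/bottom vertex restrictions. -/
def fdMatching (A : InertCat ᵒᵖ ⥤ Type) (k : ℕ) (t : Fin k → FD A 1) : Prop :=
  ∀ (i : Fin k) (h : (i : ℕ) + 1 < k),
    A.map (topV (t i).1).op ((t i).2.2) =
      A.map (botV (t ⟨(i : ℕ) + 1, h⟩).1).op ((t ⟨(i : ℕ) + 1, h⟩).2.2)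

/-- The restriction map `A_n → ∏ᵢ A_{nᵢ}` along the covering family `{γᵢ}`
associated to an active map `α : [k] → [n]`. -/
def resMap (A : InertCat ᵒᵖ ⥤ Type) {k n : ℕ} (α : mk k ⟶ mk n) :
    A.obj (Opposite.op ⟨n⟩) → ∀ i : Fin k, A.obj (Opposite.op ⟨diff α i⟩) :=
  fun a i => A.map (segInclI α i).op a

/-- Matching (fiber product over `A_0`) condition for a tuple in `∏ᵢ A_{nᵢ}`. -/
def resMatching (A : InertCat ᵒᵖ ⥤ Type) {k n : ℕ} (α : mk k ⟶ mk n)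
    (t : ∀ i : Fin k, A.obj (Opposite.op ⟨diff α i⟩)) : Prop :=
  ∀ (i : Fin k) (h : (i : ℕ) + 1 < k),
    A.map (topV (diff α i)).op (t i) =
      A.map (botV (diff α ⟨(i : ℕ) + 1, h⟩)).op (t ⟨(i : ℕ) + 1, h⟩)

/-- The length functor from the path category of a quiver to `Bℕ`. -/
def lengthFunctor (Q : Type u) [Quiver.{u + 1} Q] : Paths Q ⥤ BN where
  obj _ := SingleObj.star _
  map p := Multiplicative.ofAdd p.length
  map_id _ := rfl
  map_comp {x y z} p q := by
    show Multiplicative.ofAdd (p.comp q).length = _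
    show _ = (Multiplicative.ofAdd q.length) * (Multiplicative.ofAdd p.length)
    erw [Quiver.Path.length_comp, ← ofAdd_add]
    exact congrArg Multiplicative.ofAdd (Nat.add_comm _ _)

/-- A functor to `Bℕ` is CULF if every factorization in `(ℕ,+)` of the image of
a morphism `f` lifts uniquely to a factorization of `f`. -/
def IsCULF {C : Type u} [Category.{v} C] (F : C ⥤ BN) : Prop :=
  ∀ {x y : C} (f : x ⟶ y) (a b : Multiplicative ℕ), F.map f = a * b →
    ∃! p : Σ z : C, (x ⟶ z) × (z ⟶ y),
      p.2.1 ≫ p.2.2 = f ∧ F.map p.2.1 = a ∧ F.map p.2.2 = b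

/-- The category `𝕃` of finite linear orders `{1,…,n}` and convex monotone
injections. -/
structure LinOrdCat where
  n : ℕ

/-- A convex monotone injection between finite linear orders. -/
def IsConvexEmb {m n : ℕ} (f : Fin m → Fin n) : Prop :=
  StrictMono f ∧ ∀ (a b : Fin m) (c : Fin n), f a ≤ c → c ≤ f b → ∃ x, f x = c

instance : Category LinOrdCat where
  Hom x y := {f : Fin x.n → Fin y.n // IsConvexEmb f}
  id x := ⟨id, strictMono_id, fun _ _ c _ _ => ⟨c, rfl⟩⟩
  comp f g := ⟨g.1 ∘ f.1, (g.2.1).comp f.2.1, by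
    intro a b c h1 h2
    obtain ⟨w, hw⟩ := g.2.2 (f.1 a) (f.1 b) c h1 h2
    have ha : f.1 a ≤ w := by
      rw [← (g.2.1).le_iff_le]; rw [hw]; exact h1
    have hb : w ≤ f.1 b := by
      rw [← (g.2.1).le_iff_le]; rw [hw]; exact h2
    obtain ⟨v, hv⟩ := f.2.2 a b w ha hb
    exact ⟨v, by simp [Function.comp, hv, hw]⟩⟩
  id_comp f := by apply Subtype.ext; rfl
  comp_id f := by apply Subtype.ext; rfl
  assoc f g h := by apply Subtype.ext; rfl


/-- For any map `A' → A` of presheaves on `Δ_inert`, the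
induced map `j_!(A') → j_!(A)` is CULF: for every active `g : [k'] → [k]` the
naturality square is a pullback of sets. -/
theorem lan_map_isCULF (A' A : InertCat ᵒᵖ ⥤ Type) (η : A' ⟶ A) {k' k : ℕ}
    (g : mk k' ⟶ mk k) (hg : IsActive g) (x : FD A k) (y' : FD A' k')
    (hxy : FDmapNat η k' y' = FDmap A g hg x) :
    ∃! x' : FD A' k, FDmapNat η k x' = x ∧ FDmap A' g hg x' = y' := by
  obtain ⟨n, ⟨α, hα⟩, a⟩ := x
  obtain ⟨n', ⟨β, hβ⟩, a'⟩ := y'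
  simp only [FDmapNat, FDmap] at hxy
  obtain ⟨rfl, h2⟩ := Sigma.mk.inj_iff.mp hxy
  obtain ⟨h3, h4⟩ := Prod.mk_inj.mp (eq_of_heq h2)
  refine ⟨⟨n', ⟨α, hα⟩, a'⟩, ⟨?_, ?_⟩, ?_⟩
  · simp only [FDmapNat, h4]; rfl
  · simp only [FDmap]
    exact congrArg (fun b => (⟨n', b, a'⟩ : FD A' k')) h3.symm
  · rintro ⟨m, ⟨γ, hγ⟩, c⟩ ⟨e1, e2⟩
    simp only [FDmapNat] at e1
    obtain ⟨rfl, e1'⟩ := Sigma.mk.inj_iff.mp e1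
    obtain ⟨e1a, e1b⟩ := Prod.mk_inj.mp (eq_of_heq e1')
    simp only [FDmap] at e2
    obtain ⟨-, e2'⟩ := Sigma.mk.inj_iff.mp e2
    obtain ⟨e2a, e2b⟩ := Prod.mk_inj.mp (eq_of_heq e2')
    have : ((⟨γ, hγ⟩, c) : {f : mk k ⟶ mk m // IsActive f} × A'.obj (Opposite.op ⟨m⟩))
        = (⟨α, hα⟩, a') := by rw [e1a, e2b]
    exact congrArg (fun p => (⟨m, p⟩ : FD A' k)) this

end FreeDecompPaper
end

section
/- For a presheaf A : Δ_inert^op → Set, the free simplicial set X = j_!(A) is Segal (all Segal maps X_k → X_1 ×_{X_0} ⋯ ×_{X_0} X_1 are bijections) if and only if for every n and every reduced covering family {γ_i : [n_i] → [n]}_{i=1..k} arising from an active map α : [k] → [n], the induced map A_n → A_{n_1} ×_{A_0} ⋯ ×_{A_0} A_{n_k} is a bijection. -/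
/-! Preliminaries: the active-inert factorization system on the simplex
category, the inert subcategory `Δ_inert`, the one-object category `Bℕ`,
twisted arrow categories, and the explicit free decomposition space formula,
following Hackney–Kock, "Free decomposition spaces". -/

open CategoryTheory SimplexCategory

namespace FreeDecompPaper

/-! ### Auxiliary lemmas -/

def dnat {k : ℕ} (d : Fin k → ℕ) (t : ℕ) : ℕ := if h : t < k then d ⟨t, h⟩ else 0

lemma dnat_congr {k : ℕ} {d d' : Fin k → ℕ} (h : ∀ i, d i = d' i) (t : ℕ) :
    dnat d t = dnat d' t := by
  unfold dnat; split
  · exact h _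
  · rfl

lemma shom_ext {x y : SimplexCategory} {f g : x ⟶ y}
    (h : ∀ i, f.toOrderHom i = g.toOrderHom i) : f = g := by
  apply SimplexCategory.Hom.ext
  exact OrderHom.ext _ _ (funext h)

lemma active_val {k n : ℕ} {α : mk k ⟶ mk n} (hα : IsActive α) (j : Fin (k + 1)) :
    (α.toOrderHom j : ℕ) = ∑ t ∈ Finset.range (j : ℕ), dnat (diff α) t := by
  induction j using Fin.induction with
  | zero => rw [hα.1]; simp
  | succ i ih =>
    have hmono : (α.toOrderHom i.castSucc : ℕ) ≤ (α.toOrderHom i.succ : ℕ) :=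
      α.toOrderHom.monotone (Fin.castSucc_le_succ i)
    have hstep : (α.toOrderHom i.succ : ℕ) = (α.toOrderHom i.castSucc : ℕ) + diff α i := by
      unfold diff; omega
    rw [hstep, ih]
    have : ((i.succ : Fin (k+1)) : ℕ) = (i.castSucc : ℕ) + 1 := by simp
    rw [this, Finset.sum_range_succ]
    unfold dnat
    rw [dif_pos (show ((i.castSucc : Fin (k+1)) : ℕ) < k by simp)]
    simp

lemma eq_len {k n m : ℕ} {α : mk k ⟶ mk n} {β : mk k ⟶ mk m}
    (hα : IsActive α) (hβ : IsActive β) (h : ∀ i, diff α i = diff β i) : n = m := by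
  have h1 := active_val hα (Fin.last k)
  have h2 := active_val hβ (Fin.last k)
  have hα2 : α.toOrderHom (Fin.last k) = Fin.last n := hα.2
  have hβ2 : β.toOrderHom (Fin.last k) = Fin.last m := hβ.2
  rw [hα2] at h1
  rw [hβ2] at h2
  simp only [Fin.val_last] at h1 h2
  rw [h1, h2]
  exact Finset.sum_congr rfl fun t _ => dnat_congr h t

lemma eq_hom {k n : ℕ} {α β : mk k ⟶ mk n}
    (hα : IsActive α) (hβ : IsActive β) (h : ∀ i, diff α i = diff β i) : α = β := by
  apply shom_ext
  intro j
  apply Fin.ext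
  rw [active_val hα j, active_val hβ j]
  exact Finset.sum_congr rfl fun t _ => dnat_congr h t

lemma active_one {m : ℕ} {f : mk 1 ⟶ mk m} (hf : IsActive f) : f = mu m := by
  apply shom_ext
  intro j
  match j with
  | 0 => rw [hf.1]; apply Fin.ext; show ((0 : Fin (m+1)) : ℕ) = ((0 : Fin 2) : ℕ) * m; simp [mu]
  | 1 =>
    have hf2 : f.toOrderHom (Fin.last 1) = Fin.last m := hf.2
    have : (1 : Fin 2) = Fin.last 1 := rfl
    rw [this, hf2]
    apply Fin.ext
    show ((Fin.last m : Fin (m+1)) : ℕ) = ((Fin.last 1 : Fin 2) : ℕ) * m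
    simp [mu, Fin.last]

lemma sum_dnat {k : ℕ} (d : Fin k → ℕ) :
    ∑ t ∈ Finset.range k, dnat d t = ∑ i, d i := by
  rw [← Fin.sum_univ_eq_sum_range]
  exact Finset.sum_congr rfl fun i _ => by simp [dnat, i.isLt]

def buildα {k : ℕ} (d : Fin k → ℕ) : mk k ⟶ mk (∑ i, d i) :=
  mkHom ⟨fun j => ⟨∑ t ∈ Finset.range (j : ℕ), dnat d t, by
      have h1 : ∑ t ∈ Finset.range (j : ℕ), dnat d t ≤ ∑ t ∈ Finset.range k, dnat d t :=
        Finset.sum_le_sum_of_subset (Finset.range_subset_range.mpr (by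
          have := j.isLt; simp [len_mk] at this; omega))
      rw [sum_dnat] at h1
      simp [len_mk]
      omega⟩,
    fun a b hab => by
      simp only [Fin.mk_le_mk]
      exact Finset.sum_le_sum_of_subset (Finset.range_subset_range.mpr hab)⟩

lemma isActive_buildα {k : ℕ} (d : Fin k → ℕ) : IsActive (buildα d) := by
  constructor
  · apply Fin.ext
    show (∑ t ∈ Finset.range (((0 : Fin (k+1))) : ℕ), dnat d t) = ((0 : Fin _) : ℕ)
    simp
  · apply Fin.ext
    show (∑ t ∈ Finset.range ((Fin.last k : Fin (k+1)) : ℕ), dnat d t) = _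
    rw [Fin.val_last, sum_dnat]
    simp [Fin.last]

lemma diff_buildα {k : ℕ} (d : Fin k → ℕ) (i : Fin k) : diff (buildα d) i = d i := by
  unfold diff
  show (∑ t ∈ Finset.range ((i.succ : Fin (k+1)) : ℕ), dnat d t)
    - (∑ t ∈ Finset.range ((i.castSucc : Fin (k+1)) : ℕ), dnat d t) = d i
  have h1 : ((i.succ : Fin (k+1)) : ℕ) = ((i.castSucc : Fin (k+1)) : ℕ) + 1 := by simp
  rw [h1, Finset.sum_range_succ]
  have h2 : dnat d ((i.castSucc : Fin (k+1)) : ℕ) = d i := by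
    unfold dnat
    rw [dif_pos (show ((i.castSucc : Fin (k+1)) : ℕ) < k by simp)]
    simp
  omega

lemma seg_top_bot {k n : ℕ} (α : mk k ⟶ mk n) (i : Fin k) (h : (i : ℕ) + 1 < k) :
    topV (diff α i) ≫ segInclI α i =
      botV (diff α ⟨(i : ℕ) + 1, h⟩) ≫ segInclI α ⟨(i : ℕ) + 1, h⟩ := by
  apply Subtype.ext
  apply shom_ext
  intro j
  apply Fin.ext
  show (α.toOrderHom i.castSucc : ℕ) + ((Fin.last (diff α i)) : ℕ)
    = (α.toOrderHom (⟨(i : ℕ) + 1, h⟩ : Fin k).castSucc : ℕ) + ((0 : Fin _) : ℕ)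
  have hmono : (α.toOrderHom i.castSucc : ℕ) ≤ (α.toOrderHom i.succ : ℕ) :=
    α.toOrderHom.monotone (Fin.castSucc_le_succ i)
  have hc : (⟨(i : ℕ) + 1, h⟩ : Fin k).castSucc = i.succ := Fin.ext (by simp)
  rw [hc, Fin.val_last]
  unfold diff
  simp
  omega

lemma resMap_matching (A : InertCat ᵒᵖ ⥤ Type) {k n : ℕ} (α : mk k ⟶ mk n)
    (a : A.obj (Opposite.op ⟨n⟩)) : resMatching A α (resMap A α a) := by
  intro i h
  show A.map (topV (diff α i)).op (A.map (segInclI α i).op a)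
    = A.map (botV (diff α ⟨(i : ℕ) + 1, h⟩)).op (A.map (segInclI α ⟨(i : ℕ) + 1, h⟩).op a)
  rw [← FunctorToTypes.map_comp_apply, ← FunctorToTypes.map_comp_apply,
    ← op_comp, ← op_comp, seg_top_bot α i h]

lemma fdSegal_matching (A : InertCat ᵒᵖ ⥤ Type) (k : ℕ) (x : FD A k) :
    fdMatching A k (fdSegalMap A k x) :=
  fun i h => resMap_matching A x.2.1.1 x.2.2 i h

lemma fd1_eq {A : InertCat ᵒᵖ ⥤ Type} (a b : FD A 1) (h1 : a.1 = b.1)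
    (h2 : HEq a.2.2 b.2.2) : a = b := by
  obtain ⟨m, ⟨β, hβ⟩, u⟩ := a
  obtain ⟨m', ⟨β', hβ'⟩, v⟩ := b
  dsimp at h1 h2
  subst h1
  obtain rfl : β = β' := (active_one hβ).trans (active_one hβ').symm
  rw [eq_of_heq h2]

lemma map_cast_v {A : InertCat ᵒᵖ ⥤ Type} {m m' : ℕ} (h : m' = m)
    (g : ∀ p : ℕ, (⟨0⟩ : InertCat) ⟶ ⟨p⟩)
    (a : A.obj (Opposite.op ⟨m'⟩)) :
    A.map (g m).op (cast (congrArg (fun p => A.obj (Opposite.op ⟨p⟩)) h) a)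
      = A.map (g m').op a := by
  subst h; rfl

/-- The free simplicial set `j_!(A)` is Segal (each Segal map
is injective with image the matching tuples) if and only if `A` is a sheaf:
for every reduced covering family `{γᵢ : [nᵢ] → [n]}` arising from an active
map `α : [k] → [n]`, the restriction map `A_n → A_{n₁} ×_{A₀} ⋯ ×_{A₀} A_{n_k}`
is a bijection. -/
theorem lan_segal_iff_sheaf (A : InertCat ᵒᵖ ⥤ Type) :
    (∀ k : ℕ, 2 ≤ k →
      Function.Injective (fdSegalMap A k) ∧
      Set.range (fdSegalMap A k) = {t | fdMatching A k t}) ↔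
    (∀ (k n : ℕ), 2 ≤ k → ∀ α : mk k ⟶ mk n, IsActive α →
      Function.Injective (resMap A α) ∧
      Set.range (resMap A α) = {t | resMatching A α t}) := by
  constructor
  · intro h k n hk α hα
    constructor
    · intro a b hab
      have hxy : fdSegalMap A k ⟨n, ⟨α, hα⟩, a⟩ = fdSegalMap A k ⟨n, ⟨α, hα⟩, b⟩ := by
        funext i
        exact congrArg
          (fun z => (⟨diff α i, ⟨mu (diff α i), isActive_mu _⟩, z⟩ : FD A 1))
          (congrFun hab i)
      have h2 := (h k hk).1 hxy
      injection h2 with e1 e2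
      exact congrArg Prod.snd e2
    · ext t
      simp only [Set.mem_range, Set.mem_setOf_eq]
      constructor
      · rintro ⟨a, rfl⟩
        exact resMap_matching A α a
      · intro ht
        have hT : fdMatching A k
            (fun i => (⟨diff α i, ⟨mu (diff α i), isActive_mu _⟩, t i⟩ : FD A 1)) := ht
        have hmem : (fun i => (⟨diff α i, ⟨mu (diff α i), isActive_mu _⟩, t i⟩ : FD A 1))
            ∈ Set.range (fdSegalMap A k) := by
          rw [(h k hk).2]; exact hT
        obtain ⟨x, hx⟩ := hmem
        obtain ⟨m, ⟨β, hβ⟩, a⟩ := x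
        have hdiff : ∀ i, diff β i = diff α i := fun i =>
          congrArg Sigma.fst (congrFun hx i)
        obtain rfl : m = n := eq_len hβ hα hdiff
        obtain rfl : β = α := eq_hom hβ hα hdiff
        refine ⟨a, funext fun i => ?_⟩
        have h3 := congrFun hx i
        injection h3 with e1 e2
        exact congrArg Prod.snd e2
  · intro h k hk
    constructor
    · intro x y hxy
      obtain ⟨n, ⟨α, hα⟩, a⟩ := x
      obtain ⟨m, ⟨β, hβ⟩, b⟩ := y
      have hdiff : ∀ i, diff α i = diff β i := fun i =>
        congrArg Sigma.fst (congrFun hxy i)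
      obtain rfl : n = m := eq_len hα hβ hdiff
      obtain rfl : α = β := eq_hom hα hβ hdiff
      have hres : resMap A α a = resMap A α b := by
        funext i
        have h3 := congrFun hxy i
        injection h3 with e1 e2
        exact congrArg Prod.snd e2
      rw [(h k n hk α hα).1 hres]
    · ext t
      simp only [Set.mem_range, Set.mem_setOf_eq]
      constructor
      · rintro ⟨x, rfl⟩
        exact fdSegal_matching A k x
      · intro ht
        have hα := isActive_buildα (fun i => (t i).1)
        have hdiff := diff_buildα (fun i => (t i).1)
        set α := buildα (fun i => (t i).1) with hαdef
        have hmatch : resMatching A α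
            (fun i => cast (congrArg (fun p => A.obj (Opposite.op ⟨p⟩)) (hdiff i).symm)
              (t i).2.2) := by
          intro i hlt
          calc A.map (topV (diff α i)).op
                (cast (congrArg (fun p => A.obj (Opposite.op ⟨p⟩)) (hdiff i).symm) (t i).2.2)
              = A.map (topV (t i).1).op (t i).2.2 := map_cast_v (hdiff i).symm topV _
            _ = A.map (botV (t ⟨(i : ℕ) + 1, hlt⟩).1).op (t ⟨(i : ℕ) + 1, hlt⟩).2.2 :=
                ht i hlt
            _ = _ := (map_cast_v (hdiff ⟨(i : ℕ) + 1, hlt⟩).symm botV _).symm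
        have hmem : (fun i => cast (congrArg (fun p => A.obj (Opposite.op ⟨p⟩))
            (hdiff i).symm) (t i).2.2) ∈ Set.range (resMap A α) := by
          rw [(h k (∑ i, (t i).1) hk α hα).2]; exact hmatch
        obtain ⟨a, ha⟩ := hmem
        refine ⟨⟨∑ i, (t i).1, ⟨α, hα⟩, a⟩, funext fun i => ?_⟩
        apply fd1_eq
        · exact hdiff i
        · exact (heq_of_eq (congrFun ha i)).trans (cast_heq _ _)

end FreeDecompPaper
end

section
/- A category C admits a CULF functor to Bℕ if and only if C is free on a directed graph. Here a functor F : C → Bℕ is CULF if for every morphism f in C and every factorization F(f) = b + a in ℕ, there is a unique factorization f = f_2 ∘ f_1 in C with F(f_1) = a and F(f_2) = b. -/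
/-! Preliminaries: the active-inert factorization system on the simplex
category, the inert subcategory `Δ_inert`, the one-object category `Bℕ`,
twisted arrow categories, and the explicit free decomposition space formula,
following Hackney–Kock, "Free decomposition spaces". -/

open CategoryTheory SimplexCategory

namespace FreeDecompPaper

section Street

variable {C : Type u} [SmallCategory C]

lemma degZero {F : C ⥤ BN} (hF : IsCULF F) {x y : C} (f : x ⟶ y) (h : F.map f = (1 : Multiplicative ℕ)) :
    ∃ e : x = y, f = eqToHom e := by
  have hone : ∀ (a : BN), 𝟙 a = (1 : Multiplicative ℕ) := fun _ => rfl
  obtain ⟨w, hw, hu⟩ := hF f 1 1 (by rw [h, one_mul])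
  have h1 : (⟨x, 𝟙 x, f⟩ : Σ z : C, (x ⟶ z) × (z ⟶ y)) = w :=
    hu _ ⟨by simp, by rw [F.map_id, hone], h⟩
  have h2 : (⟨y, f, 𝟙 y⟩ : Σ z : C, (x ⟶ z) × (z ⟶ y)) = w :=
    hu _ ⟨by simp, h, by rw [F.map_id, hone]⟩
  have h3 := h1.trans h2.symm
  rw [Sigma.ext_iff] at h3
  obtain ⟨hxy, h4⟩ := h3
  dsimp at hxy
  subst hxy
  refine ⟨rfl, ?_⟩
  have h5 := eq_of_heq h4
  have := congrArg Prod.fst h5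
  simpa using this.symm


/-- The quiver of degree-one morphisms. -/
def QOf (F : C ⥤ BN) : Type u := C

/-- Identity on objects, into the quiver. -/
def toQ (F : C ⥤ BN) (x : C) : QOf F := x

/-- Identity on objects, out of the quiver. -/
def unQ (F : C ⥤ BN) (x : QOf F) : C := x

instance quiverQOf (F : C ⥤ BN) : Quiver.{u+1} (QOf F) :=
  ⟨fun x y => ULift.{u+1} {f : unQ F x ⟶ unQ F y // F.map f = Multiplicative.ofAdd 1}⟩

/-- Compose a path of degree-one morphisms. -/
def compPath (F : C ⥤ BN) {x : QOf F} : ∀ {y : QOf F}, Quiver.Path x y → (unQ F x ⟶ unQ F y)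
  | _, .nil => 𝟙 _
  | _, .cons p e => compPath F p ≫ e.down.1

@[simp] lemma compPath_nil (F : C ⥤ BN) {x : QOf F} :
    compPath F (.nil : Quiver.Path x x) = 𝟙 _ := rfl

@[simp] lemma compPath_cons (F : C ⥤ BN) {x y z : QOf F}
    (p : Quiver.Path x y) (e : y ⟶ z) :
    compPath F (p.cons e) = compPath F p ≫ e.down.1 := rfl

lemma map_compPath (F : C ⥤ BN) {x y : QOf F} (p : Quiver.Path x y) :
    F.map (compPath F p) = Multiplicative.ofAdd p.length := by
  induction p with
  | nil =>
    rw [compPath_nil, F.map_id]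
    rfl
  | cons p e ih =>
    rw [compPath_cons, F.map_comp, SingleObj.comp_as_mul, e.down.2, ih, ← ofAdd_add,
      Quiver.Path.length_cons, Nat.add_comm]

lemma exists_path {F : C ⥤ BN} (hF : IsCULF F) :
    ∀ (n : ℕ) {x y : C} (f : x ⟶ y), F.map f = Multiplicative.ofAdd n →
      ∃ p : Quiver.Path (toQ F x) (toQ F y), compPath F p = f := by
  intro n
  induction n with
  | zero =>
    intro x y f h
    obtain ⟨e, rfl⟩ := degZero hF f (by rw [h]; rfl)
    subst e
    exact ⟨Quiver.Path.nil, by rw [compPath_nil]; rfl⟩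
  | succ n ih =>
    intro x y f h
    obtain ⟨⟨z, f1, f2⟩, ⟨hc, ha, hb⟩, -⟩ :=
      hF f (Multiplicative.ofAdd n) (Multiplicative.ofAdd 1) (by rw [h, ← ofAdd_add])
    obtain ⟨p, hp⟩ := ih f1 ha
    exact ⟨p.cons ⟨⟨f2, hb⟩⟩, by rw [compPath_cons]; show compPath F p ≫ f2 = f; rw [hp]; exact hc⟩

lemma path_unique {F : C ⥤ BN} (hF : IsCULF F) :
    ∀ {x y : QOf F} (p q : Quiver.Path x y),
      compPath F p = compPath F q → p = q := by
  intro x y p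
  induction p with
  | nil =>
    intro q h
    have hd := map_compPath F q
    rw [← h, map_compPath] at hd
    have h0 : q.length = 0 := (Multiplicative.ofAdd.injective hd).symm
    exact (Quiver.Path.eq_nil_of_length_zero q h0).symm
  | @cons c d p e ih =>
    intro q h
    cases q with
    | nil =>
      exfalso
      have hd := (map_compPath F (p.cons e)).symm.trans
        ((congrArg F.map h).trans (map_compPath F .nil))
      have := Multiplicative.ofAdd.injective hd
      simp at this
    | @cons c' _ q' e' =>
      have hd := (map_compPath F (p.cons e)).symm.trans
        ((congrArg F.map h).trans (map_compPath F (q'.cons e')))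
      have hlen : p.length = q'.length := by
        have := Multiplicative.ofAdd.injective hd
        simpa using this
      have hmap : F.map (compPath F (p.cons e)) =
          Multiplicative.ofAdd p.length * Multiplicative.ofAdd 1 := by
        rw [map_compPath, ← ofAdd_add]
        rfl
      obtain ⟨w, hw, hu⟩ := hF (compPath F (p.cons e))
        (Multiplicative.ofAdd p.length) (Multiplicative.ofAdd 1) hmap
      have h1 : (⟨unQ F c, compPath F p, e.down.1⟩ :
          Σ z : C, (unQ F x ⟶ z) × (z ⟶ unQ F _)) = w :=
        hu _ ⟨rfl, map_compPath F p, e.down.2⟩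
      have h2 : (⟨unQ F c', compPath F q', e'.down.1⟩ :
          Σ z : C, (unQ F x ⟶ z) × (z ⟶ unQ F _)) = w :=
        hu _ ⟨h.symm, by rw [map_compPath, hlen], e'.down.2⟩
      have h3 := h1.trans h2.symm
      rw [Sigma.ext_iff] at h3
      obtain ⟨hcc, h4⟩ := h3
      have hcc' : c = c' := hcc
      subst hcc'
      have h5 := eq_of_heq h4
      have hp : compPath F p = compPath F q' := congrArg Prod.fst h5
      have he : e.down.1 = e'.down.1 := congrArg Prod.snd h5
      rw [ih q' hp, (show e = e' from congrArg ULift.up (Subtype.ext he))]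

lemma existsUnique_path {F : C ⥤ BN} (hF : IsCULF F) {x y : C} (f : x ⟶ y) :
    ∃! p : Quiver.Path (toQ F x) (toQ F y), compPath F p = f := by
  obtain ⟨p, hp⟩ := exists_path hF (Multiplicative.toAdd (F.map f)) f (by simp)
  exact ⟨p, hp, fun q hq => path_unique hF q p (hq.trans hp.symm)⟩

/-- Decompose a morphism into a path of degree-one morphisms. -/
noncomputable def toPath {F : C ⥤ BN} (hF : IsCULF F) {x y : C} (f : x ⟶ y) :
    Quiver.Path (toQ F x) (toQ F y) :=
  (existsUnique_path hF f).exists.choose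

lemma toPath_spec {F : C ⥤ BN} (hF : IsCULF F) {x y : C} (f : x ⟶ y) :
    compPath F (toPath hF f) = f :=
  (existsUnique_path hF f).exists.choose_spec

lemma compPath_comp (F : C ⥤ BN) {x y z : QOf F}
    (p : Quiver.Path x y) (q : Quiver.Path y z) :
    compPath F (p.comp q) = compPath F p ≫ compPath F q := by
  induction q with
  | nil => simp [Quiver.Path.comp]
  | cons q e ih =>
    show compPath F ((p.comp q).cons e) = _
    rw [compPath_cons, ih, compPath_cons, Category.assoc]

/-- The functor from the path category. -/
def PF (F : C ⥤ BN) : Paths (QOf F) ⥤ C where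
  obj x := unQ F x
  map p := compPath F p
  map_id _ := rfl
  map_comp p q := compPath_comp F p q

/-- The functor to the path category. -/
noncomputable def PG {F : C ⥤ BN} (hF : IsCULF F) : C ⥤ Paths (QOf F) where
  obj x := toQ F x
  map f := toPath hF f
  map_id x := path_unique hF _ _ (by rw [toPath_spec]; rfl)
  map_comp f g := path_unique hF _ _ (by
    rw [toPath_spec]
    show f ≫ g = compPath F ((toPath hF f).comp (toPath hF g))
    rw [compPath_comp, toPath_spec, toPath_spec]; rfl)

lemma PG_PF {F : C ⥤ BN} (hF : IsCULF F) : PG hF ⋙ PF F = 𝟭 C :=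
  CategoryTheory.Functor.ext (fun _ => rfl) (fun x y f => by
    show compPath F (toPath hF f) = _
    rw [toPath_spec hF f]
    erw [eqToHom_refl, eqToHom_refl, Category.id_comp, Category.comp_id]; rfl)

lemma PF_PG {F : C ⥤ BN} (hF : IsCULF F) : PF F ⋙ PG hF = 𝟭 (Paths (QOf F)) :=
  CategoryTheory.Functor.ext (fun _ => rfl) (fun x y p => by
    show toPath hF (compPath F p) = _
    have h : toPath hF (compPath F p) = p :=
      path_unique hF _ _ (toPath_spec hF (compPath F p))
    rw [h]
    erw [eqToHom_refl, eqToHom_refl, Category.id_comp, Category.comp_id]; rfl)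


lemma path_split {Q : Type u} [Quiver.{u+1} Q] :
    ∀ (nb : ℕ) {x y : Q} (f : Quiver.Path x y) (na : ℕ),
      f.length = na + nb →
      ∃! p : Σ z : Q, Quiver.Path x z × Quiver.Path z y,
        (p.2.1).comp p.2.2 = f ∧ (p.2.1).length = na ∧ (p.2.2).length = nb := by
  intro nb
  induction nb with
  | zero =>
    intro x y f na h
    refine ⟨⟨y, f, Quiver.Path.nil⟩, ⟨rfl, by dsimp only; omega, rfl⟩, ?_⟩
    rintro ⟨z, p1, p2⟩ ⟨hc, h1, h2⟩
    cases p2 with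
    | nil =>
      have : p1 = f := hc
      subst this
      rfl
    | cons q e => simp at h2
  | succ nb ih =>
    intro x y f na h
    cases f with
    | nil => exfalso; simp at h
    | @cons m _ f' e =>
      have h' : f'.length = na + nb := by
        simp at h
        omega
      obtain ⟨⟨z, p1, p2⟩, ⟨hc, h1, h2⟩, hu⟩ := ih f' na h'
      dsimp only at hc h1 h2
      refine ⟨⟨z, p1, p2.cons e⟩, ⟨?_, h1, ?_⟩, ?_⟩
      · dsimp only
        rw [Quiver.Path.comp_cons, hc]
      · dsimp only
        rw [Quiver.Path.length_cons, h2]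
      rintro ⟨w, q1, q2⟩ ⟨hc', h1', h2'⟩
      dsimp only at hc' h1' h2'
      cases q2 with
      | nil => simp at h2'
      | @cons m' _ q2' e2 =>
        rw [Quiver.Path.comp_cons] at hc'
        have hm : m' = m := Quiver.Path.obj_eq_of_cons_eq_cons hc'
        subst hm
        have hq : q1.comp q2' = f' := eq_of_heq (Quiver.Path.heq_of_cons_eq_cons hc')
        have he : e2 = e := eq_of_heq (Quiver.Path.hom_heq_of_cons_eq_cons hc')
        subst he
        have h2'' : q2'.length = nb := by
          simp at h2'
          omega
        have key := hu ⟨w, q1, q2'⟩ ⟨hq, h1', h2''⟩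
        rw [Sigma.ext_iff] at key
        obtain ⟨hw, hpair⟩ := key
        have hw' : w = z := hw
        subst hw'
        have hpair' := eq_of_heq hpair
        have e1 : q1 = p1 := congrArg Prod.fst hpair'
        have e2' : q2' = p2 := congrArg Prod.snd hpair'
        rw [e1, e2']

lemma lengthFunctor_culf (Q : Type u) [Quiver.{u+1} Q] : IsCULF (lengthFunctor Q) := by
  intro x y f a b hab
  have hmap : ∀ {v w : Paths Q} (g : v ⟶ w),
      (lengthFunctor Q).map g = Multiplicative.ofAdd (Quiver.Path.length (V := Q) g) :=
    fun _ => rfl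
  have hlen : Quiver.Path.length (V := Q) f =
      Multiplicative.toAdd a + Multiplicative.toAdd b := by
    have h1 := (hmap f).symm.trans hab
    have h2 := congrArg Multiplicative.toAdd h1
    simpa using h2
  have key := path_split (Q := Q) (Multiplicative.toAdd b) (x := (x : Q)) (y := (y : Q)) f
    (Multiplicative.toAdd a) hlen
  refine (existsUnique_congr ?_).mpr key
  rintro ⟨z, p1, p2⟩
  dsimp only
  constructor
  · rintro ⟨hc, h1, h2⟩
    refine ⟨hc, ?_, ?_⟩
    · simpa using congrArg Multiplicative.toAdd ((hmap p1).symm.trans h1)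
    · simpa using congrArg Multiplicative.toAdd ((hmap p2).symm.trans h2)
  · rintro ⟨hc, h1, h2⟩
    refine ⟨hc, ?_, ?_⟩
    · rw [hmap p1, h1]
      simp
    · rw [hmap p2, h2]
      simp

lemma BN_map_eqToHom {D : Type u} [SmallCategory D] (F : D ⥤ BN) {c c' : D} (e : c = c') :
    F.map (eqToHom e) = (1 : Multiplicative ℕ) := by
  subst e
  rw [eqToHom_refl, F.map_id]
  rfl

lemma comp_map_eqToHom {C D : Type u} [SmallCategory C] [SmallCategory D]
    (G : C ⥤ D) (F : D ⥤ BN) {c c' : C} (e : c = c') :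
    F.map (G.map (eqToHom e)) = (1 : Multiplicative ℕ) := by
  subst e
  rw [eqToHom_refl, G.map_id, F.map_id]
  rfl

lemma faithful_of_inv {C D : Type u} [Category.{v} C] [Category.{w} D]
    (G : C ⥤ D) (G' : D ⥤ C) (h1 : G ⋙ G' = 𝟭 C) {v w : C} (p q : v ⟶ w)
    (h : G.map p = G.map q) : p = q := by
  have A := Functor.congr_hom h1 p
  have B := Functor.congr_hom h1 q
  simp only [Functor.comp_map, Functor.id_map] at A B
  rw [h, B] at A
  have := congrArg (fun t => eqToHom (Functor.congr_obj h1 v).symm ≫ t ≫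
    eqToHom (Functor.congr_obj h1 w)) A
  simpa using this.symm

lemma BN_map_conj {D : Type u} [Category.{w} D] (F : D ⥤ BN) {c c' d d' : D}
    (e : c' = c) (e' : d = d') (g : c ⟶ d) :
    F.map (eqToHom e ≫ g ≫ eqToHom e') = F.map g := by
  subst e
  subst e'
  simp

lemma isCULF_comp_iso {C D : Type u} [Category.{v} C] [Category.{w} D]
    (G : C ⥤ D) (G' : D ⥤ C) (h1 : G ⋙ G' = 𝟭 C) (h2 : G' ⋙ G = 𝟭 D)
    {F : D ⥤ BN} (hF : IsCULF F) : IsCULF (G ⋙ F) := by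
  intro x y f a b hab
  have hx : G'.obj (G.obj x) = x := Functor.congr_obj h1 x
  have hy : G'.obj (G.obj y) = y := Functor.congr_obj h1 y
  obtain ⟨⟨z, g1, g2⟩, hwit, hu⟩ := hF (G.map f) a b hab
  obtain ⟨hc, ha, hb⟩ := hwit
  dsimp only at hc ha hb
  have hgf : G'.map (G.map f) = eqToHom hx ≫ f ≫ eqToHom hy.symm := by
    have := Functor.congr_hom h1 f
    simpa using this
  have Φsol : ∀ (s : Σ z' : C, (x ⟶ z') × (z' ⟶ y)),
      (s.2.1 ≫ s.2.2 = f ∧ (G ⋙ F).map s.2.1 = a ∧ (G ⋙ F).map s.2.2 = b) →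
      (⟨G.obj s.1, G.map s.2.1, G.map s.2.2⟩ :
        Σ d : D, (G.obj x ⟶ d) × (d ⟶ G.obj y)) = ⟨z, g1, g2⟩ := by
    rintro ⟨w, p1, p2⟩ ⟨pc, pa, pb⟩
    dsimp only at pc pa pb
    exact hu _ ⟨by dsimp only; rw [← G.map_comp, pc], pa, pb⟩
  have hsat : ((eqToHom hx.symm ≫ G'.map g1) ≫ (G'.map g2 ≫ eqToHom hy) = f ∧
      (G ⋙ F).map (eqToHom hx.symm ≫ G'.map g1) = a ∧
      (G ⋙ F).map (G'.map g2 ≫ eqToHom hy) = b) := by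
    refine ⟨?_, ?_, ?_⟩
    · rw [Category.assoc, ← Category.assoc (G'.map g1), ← G'.map_comp, hc, hgf]
      simp
    · show F.map (G.map (eqToHom hx.symm ≫ G'.map g1)) = a
      have hG := Functor.congr_hom h2 g1
      simp only [Functor.comp_map, Functor.id_map] at hG
      rw [G.map_comp, eqToHom_map G, hG]
      simp only [Category.assoc, eqToHom_trans, eqToHom_trans_assoc]
      rw [BN_map_conj, ha]
    · show F.map (G.map (G'.map g2 ≫ eqToHom hy)) = b
      have hG := Functor.congr_hom h2 g2
      simp only [Functor.comp_map, Functor.id_map] at hG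
      rw [G.map_comp, eqToHom_map G, hG]
      simp only [Category.assoc, eqToHom_trans, eqToHom_trans_assoc]
      rw [BN_map_conj, hb]
  refine ⟨⟨G'.obj z, eqToHom hx.symm ≫ G'.map g1, G'.map g2 ≫ eqToHom hy⟩,
    ⟨hsat.1, hsat.2.1, hsat.2.2⟩, ?_⟩
  rintro ⟨w, p1, p2⟩ hp
  have e1 := Φsol ⟨w, p1, p2⟩ hp
  have e2 := Φsol ⟨G'.obj z, eqToHom hx.symm ≫ G'.map g1, G'.map g2 ≫ eqToHom hy⟩ hsat
  have e3 := e1.trans e2.symm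
  rw [Sigma.ext_iff] at e3
  obtain ⟨hobj, hpair⟩ := e3
  have hw2 : G'.obj (G.obj w) = w := Functor.congr_obj h1 w
  have hwz : w = G'.obj z := by
    have h4 : G'.obj (G.obj w) = G'.obj (G.obj (G'.obj z)) := congrArg G'.obj hobj
    have h5 : G'.obj (G.obj (G'.obj z)) = G'.obj z := Functor.congr_obj h1 (G'.obj z)
    rw [hw2, h5] at h4
    exact h4
  subst hwz
  have hpair' := eq_of_heq hpair
  have hp1 : G.map p1 = G.map (eqToHom hx.symm ≫ G'.map g1) := congrArg Prod.fst hpair'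
  have hp2 : G.map p2 = G.map (G'.map g2 ≫ eqToHom hy) := congrArg Prod.snd hpair'
  have q1 := faithful_of_inv G G' h1 _ _ hp1
  have q2 := faithful_of_inv G G' h1 _ _ hp2
  rw [q1, q2]


end Street

/-- Street. A category admits a CULF functor to `Bℕ` if and
only if it is free on a directed graph, i.e. isomorphic to the path category
of a quiver. -/
theorem culf_to_BN_iff_free {C : Type u} [SmallCategory C] :
    (∃ F : C ⥤ BN, IsCULF F) ↔
      ∃ (Q : Type u) (_ : Quiver.{u + 1} Q),
        Nonempty (Cat.of (ULiftHom.{u + 1} C) ≅ Cat.of (Paths Q)) := by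
  constructor
  · rintro ⟨F, hF⟩
    refine ⟨QOf F, inferInstance, ⟨?_⟩⟩
    refine ⟨(ULiftHom.down ⋙ PG hF).toCatHom, (PF F ⋙ ULiftHom.up).toCatHom, ?_, ?_⟩
    · apply Cat.ext
      show (ULiftHom.down ⋙ PG hF) ⋙ (PF F ⋙ ULiftHom.up) = 𝟭 _
      rw [Functor.assoc, ← Functor.assoc (PG hF), PG_PF hF]
      rfl
    · apply Cat.ext
      show (PF F ⋙ ULiftHom.up) ⋙ (ULiftHom.down ⋙ PG hF) = 𝟭 _
      exact PF_PG hF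
  · rintro ⟨Q, hQ, ⟨I⟩⟩
    letI := hQ
    have h1 : ((ULiftHom.up : C ⥤ ULiftHom.{u+1} C) ⋙ I.hom.toFunctor) ⋙
        (I.inv.toFunctor ⋙ (ULiftHom.down : ULiftHom.{u+1} C ⥤ C)) = 𝟭 C := by
      have := congrArg Cat.Hom.toFunctor I.hom_inv_id
      rw [Cat.Hom.comp_toFunctor, Cat.Hom.id_toFunctor] at this
      have := congrArg (fun G : ULiftHom.{u+1} C ⥤ ULiftHom.{u+1} C =>
        (ULiftHom.up : C ⥤ ULiftHom.{u+1} C) ⋙ G ⋙ (ULiftHom.down : ULiftHom.{u+1} C ⥤ C)) this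
      exact this
    have h2 : (I.inv.toFunctor ⋙ (ULiftHom.down : ULiftHom.{u+1} C ⥤ C)) ⋙
        ((ULiftHom.up : C ⥤ ULiftHom.{u+1} C) ⋙ I.hom.toFunctor) =
        𝟭 (Paths Q) := by
      have := congrArg Cat.Hom.toFunctor I.inv_hom_id
      rw [Cat.Hom.comp_toFunctor, Cat.Hom.id_toFunctor] at this
      exact this
    exact ⟨((ULiftHom.up : C ⥤ ULiftHom.{u+1} C) ⋙ I.hom.toFunctor) ⋙ lengthFunctor Q,
      isCULF_comp_iso _ _ h1 h2 (lengthFunctor_culf Q)⟩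


end FreeDecompPaper
end

section
/- If C is the free category on a quiver Q, then the length functor L : C → Bℕ sending a path to its length is CULF, and it is the unique CULF functor from C to Bℕ. -/
/-! Preliminaries: the active-inert factorization system on the simplex
category, the inert subcategory `Δ_inert`, the one-object category `Bℕ`,
twisted arrow categories, and the explicit free decomposition space formula,
following Hackney–Kock, "Free decomposition spaces". -/

open CategoryTheory SimplexCategory

namespace FreeDecompPaper

section Aux

variable {Q : Type u} [Quiver.{u + 1} Q]

/-- Unique splitting of a path into a prefix of given length and the
complementary suffix. -/
lemma path_splitU {x : Q} (lb : ℕ) :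
    ∀ {y : Q} (f : Quiver.Path x y) (la : ℕ), f.length = la + lb →
    ∃! p : Σ z : Q, Quiver.Path x z × Quiver.Path z y,
      p.2.1.comp p.2.2 = f ∧ p.2.1.length = la ∧ p.2.2.length = lb := by
  induction lb with
  | zero =>
    intro y f la h
    refine ⟨⟨y, f, Quiver.Path.nil⟩, ⟨Quiver.Path.comp_nil f, ?_, rfl⟩, ?_⟩
    · show f.length = la
      omega
    · rintro ⟨z, p, q⟩ ⟨hc, hla, hlb⟩
      cases q with
      | nil =>
        have hp : p = f := by simpa [Quiver.Path.comp_nil] using hc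
        subst hp; rfl
      | cons q' e => simp [Quiver.Path.length] at hlb
  | succ lb ih =>
    intro y f la h
    cases f with
    | nil => simp [Quiver.Path.length] at h
    | cons f' e =>
      have h' : f'.length = la + lb := by
        simp [Quiver.Path.length] at h; omega
      obtain ⟨⟨z, p, q'⟩, ⟨hc, hla, hlb⟩, huniq⟩ := ih f' la h'
      refine ⟨⟨z, p, q'.cons e⟩, ⟨?_, hla, ?_⟩, ?_⟩
      · show (p.comp (q'.cons e)) = f'.cons e
        rw [Quiver.Path.comp_cons]
        exact congrArg (fun t => Quiver.Path.cons t e) hc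
      · show (q'.cons e).length = lb + 1
        simp [Quiver.Path.length, hlb]
      · rintro ⟨z₂, p₂, q₂⟩ ⟨hc₂, hla₂, hlb₂⟩
        cases q₂ with
        | nil => simp [Quiver.Path.length] at hlb₂
        | cons q₂' e₂ =>
          have hc₂' : (p₂.comp q₂').cons e₂ = f'.cons e := by
            rw [← Quiver.Path.comp_cons]; exact hc₂
          injection hc₂' with hb hy hpath hedge
          subst hb
          have hpath' : p₂.comp q₂' = f' := eq_of_heq hpath
          have hedge' : e₂ = e := eq_of_heq hedge
          subst hedge'
          have hkey := huniq ⟨z₂, p₂, q₂'⟩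
            ⟨hpath', hla₂, by simpa [Quiver.Path.length] using hlb₂⟩
          exact congrArg (fun t : Σ z : Q, Quiver.Path x z × Quiver.Path z _ =>
            (⟨t.1, t.2.1, t.2.2.cons e₂⟩ : Σ z : Q, Quiver.Path x z × Quiver.Path z y)) hkey

lemma lengthFunctor_map {x y : Q} (f : Quiver.Path x y) :
    (lengthFunctor Q).map (X := x) (Y := y) f = Multiplicative.ofAdd f.length := rfl

lemma lengthFunctor_map' {x y : Paths Q} (f : x ⟶ y) :
    (lengthFunctor Q).map f = Multiplicative.ofAdd (Quiver.Path.length (V := Q) f) := rfl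

lemma isCULF_length (F : Paths Q ⥤ BN) (hF : IsCULF F)
    {x y : Q} (e : x ⟶ y) :
    F.map (X := x) (Y := y) e.toPath = Multiplicative.ofAdd 1 := by
  obtain ⟨n, hFe⟩ : ∃ n, F.map (X := x) (Y := y) e.toPath =
      Multiplicative.ofAdd n := ⟨_, rfl⟩
  suffices h : n = 1 by rw [hFe, h]
  rcases n with _ | _ | n
  · -- n = 0 : two distinct trivial factorizations, contradicting uniqueness
    exfalso
    obtain ⟨t, ht, huniq⟩ := hF (x := x) (y := y) e.toPath 1 1 (by rw [hFe]; rfl)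
    have h1 := huniq ⟨x, Quiver.Path.nil, e.toPath⟩
      ⟨Quiver.Path.nil_comp _, F.map_id (X := x), hFe⟩
    have h2 := huniq ⟨y, e.toPath, Quiver.Path.nil⟩
      ⟨Quiver.Path.comp_nil _, hFe, F.map_id (X := y)⟩
    have hlen := congrArg
      (fun t : Σ z : Q, Quiver.Path x z × Quiver.Path z y => t.2.1.length)
      (h1.trans h2.symm)
    simp [Quiver.Path.length, Quiver.Hom.toPath] at hlen
  · rfl
  · -- n ≥ 2 : a factorization n = 1 + (n+1) cannot lift
    exfalso
    obtain ⟨⟨z, p, q⟩, ⟨hc, hp, hq⟩, -⟩ := hF (x := x) (y := y) e.toPath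
      (Multiplicative.ofAdd 1) (Multiplicative.ofAdd (n + 1))
      (by rw [hFe, ← ofAdd_add]; congr 1; omega)
    have hlc : Quiver.Path.length p + Quiver.Path.length q = 1 := by
      have := congrArg Quiver.Path.length
        (show Quiver.Path.comp p q = e.toPath from hc)
      erw [Quiver.Path.length_comp] at this
      simpa [Quiver.Path.length_comp, Quiver.Hom.toPath, Quiver.Path.length]
        using this
    change Quiver.Path (V := Q) x z at p
    cases p with
    | nil =>
      have h1 : (1 : Multiplicative ℕ) = Multiplicative.ofAdd 1 := by
        rw [← hp]; exact (F.map_id _).symm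
      exact absurd (congrArg Multiplicative.toAdd h1) (by simp)
    | cons p' ep =>
      change Quiver.Path (V := Q) _ y at q
      cases q with
      | nil =>
        have h1 : (1 : Multiplicative ℕ) = Multiplicative.ofAdd (n + 1) := by
          rw [← hq]; exact (F.map_id _).symm
        have := congrArg Multiplicative.toAdd h1
        simp at this
      | cons q' eq' => simp [Quiver.Path.length] at hlc; omega

lemma culf_map_eq (F : Paths Q ⥤ BN) (hF : IsCULF F) {x y : Q}
    (f : Quiver.Path x y) :
    F.map (X := x) (Y := y) f = Multiplicative.ofAdd f.length := by
  induction f with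
  | nil => exact F.map_id (X := x)
  | cons p e ih =>
    have hcomp : F.map (X := x) (Y := _) (Quiver.Path.cons p e) =
        F.map (X := x) p ≫ F.map e.toPath := F.map_comp p e.toPath
    rw [hcomp, ih, isCULF_length F hF e]
    show Multiplicative.ofAdd 1 * Multiplicative.ofAdd p.length = _
    rw [← ofAdd_add]
    exact congrArg Multiplicative.ofAdd (by simp [Quiver.Path.length]; omega)

end Aux

/-- For the free category on a quiver `Q`, the length functor
to `Bℕ` is CULF, and it is the unique CULF functor to `Bℕ`. -/
theorem lengthFunctor_culf_unique (Q : Type u) [Quiver.{u + 1} Q] :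
    IsCULF (lengthFunctor Q) ∧
      ∀ F : Paths Q ⥤ BN, IsCULF F → F = lengthFunctor Q := by
  constructor
  · intro x y f a b hab
    have hlen : Quiver.Path.length f =
        Multiplicative.toAdd a + Multiplicative.toAdd b := by
      have := congrArg Multiplicative.toAdd hab
      simpa [lengthFunctor_map'] using this
    obtain ⟨t, ⟨hc, hla, hlb⟩, huniq⟩ :=
      path_splitU (Multiplicative.toAdd b) f (Multiplicative.toAdd a) hlen
    refine ⟨t, ⟨hc, ?_, ?_⟩, ?_⟩
    · rw [lengthFunctor_map', hla]; simp
    · rw [lengthFunctor_map', hlb]; simp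
    · rintro t₂ ⟨hc₂, ha₂, hb₂⟩
      refine huniq t₂ ⟨hc₂, ?_, ?_⟩
      · have := congrArg Multiplicative.toAdd ha₂
        simpa [lengthFunctor_map'] using this
      · have := congrArg Multiplicative.toAdd hb₂
        simpa [lengthFunctor_map'] using this
  · intro F hF
    refine CategoryTheory.Functor.ext (fun _ => rfl) ?_
    intro x y f
    simp only [eqToHom_refl, Category.comp_id, Category.id_comp]
    rw [culf_map_eq F hF f, lengthFunctor_map']

end FreeDecompPaper
end
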